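/- Let N be a finite nonempty set (of branching nodes), let d ≥ 1, let f : N → {1,…,d} (the feature of each node), and let ℓ, u : N → ℝ with ℓ(n) < u(n) for every n ∈ N (the admissible threshold interval of each node). Call θ : N → ℝ admissible if ℓ(n) ≤ θ(n) < u(n) for every n ∈ N. Then the minimum, over all admissible θ, of the cardinality of the set of distinct pairs {(f(n), θ(n)) : n ∈ N} equals Σ_{i=1}^{d} π_i, where π_i is the piercing number of the subfamily of intervals {[ℓ(n), u(n)) : n ∈ N, f(n) = i} (with π_i = 0 when this subfamily is empty). (This is the reduction of the problem of minimizing the number of distinct branching conditions to one minimum intersecting set problem per feature.) -/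
import Mathlib


/-- Reduction of the minimization of the number of distinct branching conditions
to one minimum intersecting set problem per feature: for a finite nonempty set of
branching nodes with features `f n ∈ {1,…,d}` and admissible threshold intervals
`[ℓ n, u n)`, the minimum over all admissible threshold assignments `θ` of the
number of distinct pairs `(f n, θ n)` equals the sum over the features
`i = 1,…,d` of the piercing numbers of the subfamilies
`{[ℓ n, u n) : f n = i}` (the piercing number being `0` for empty subfamilies). -/
theorem min_distinct_branching_conditions_eq_sum_piercing
    (ι : Type) [Fintype ι] [Nonempty ι]
    (d : ℕ) (hd : 1 ≤ d)
    (f : ι → ℕ) (hf : ∀ n, 1 ≤ f n ∧ f n ≤ d)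
    (ℓ u : ι → ℝ) (hne : ∀ n, ℓ n < u n) :
    sInf {c | ∃ θ : ι → ℝ, (∀ n, ℓ n ≤ θ n ∧ θ n < u n) ∧
        (Finset.univ.image fun n => (f n, θ n)).card = c}
      = ∑ i ∈ Finset.Icc 1 d,
          sInf {c | ∃ S : Finset ℝ, S.card = c ∧
            ∀ n, f n = i → ∃ x ∈ S, x ∈ Set.Ico (ℓ n) (u n)} := by
  classical
  set A : ℕ → Set ℕ := fun i => {c | ∃ S : Finset ℝ, S.card = c ∧
      ∀ n, f n = i → ∃ x ∈ S, x ∈ Set.Ico (ℓ n) (u n)} with hA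
  have hAne : ∀ i, (A i).Nonempty := by
    intro i
    exact ⟨_, (Finset.univ.filter (fun n => f n = i)).image ℓ, rfl,
      fun n hn => ⟨ℓ n, Finset.mem_image_of_mem _
        (Finset.mem_filter.mpr ⟨Finset.mem_univ _, hn⟩), le_refl _, hne n⟩⟩
  have hmem : ∀ i, sInf (A i) ∈ A i := fun i => Nat.sInf_mem (hAne i)
  choose S hScard hSp using hmem
  have hθex : ∀ n, ∃ x, x ∈ S (f n) ∧ x ∈ Set.Ico (ℓ n) (u n) := by
    intro n
    obtain ⟨x, hx, hx2⟩ := hSp (f n) n rfl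
    exact ⟨x, hx, hx2⟩
  choose θ hθS hθI using hθex
  apply le_antisymm
  · refine le_trans (Nat.sInf_le ⟨θ, fun n => ⟨(hθI n).1, (hθI n).2⟩, rfl⟩) ?_
    calc (Finset.univ.image fun n => (f n, θ n)).card
        ≤ ((Finset.Icc 1 d).biUnion fun i => (S i).image fun x => (i, x)).card := by
          apply Finset.card_le_card
          intro p hp
          simp only [Finset.mem_image, Finset.mem_univ, true_and] at hp
          obtain ⟨n, rfl⟩ := hp
          exact Finset.mem_biUnion.mpr ⟨f n, Finset.mem_Icc.mpr ⟨(hf n).1, (hf n).2⟩,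
            Finset.mem_image_of_mem _ (hθS n)⟩
      _ ≤ ∑ i ∈ Finset.Icc 1 d, ((S i).image fun x => (i, x)).card :=
          Finset.card_biUnion_le
      _ ≤ ∑ i ∈ Finset.Icc 1 d, (S i).card :=
          Finset.sum_le_sum fun i _ => Finset.card_image_le
      _ = _ := Finset.sum_congr rfl fun i _ => hScard i
  · apply le_csInf
    · exact ⟨_, ℓ, fun n => ⟨le_refl _, hne n⟩, rfl⟩
    · rintro c ⟨θ', hθ', rfl⟩
      set T : ℕ → Finset ℝ := fun i => (Finset.univ.filter fun n => f n = i).image θ'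
        with hT
      have h1 : ∀ i, sInf (A i) ≤ (T i).card := by
        intro i
        apply Nat.sInf_le
        exact ⟨T i, rfl, fun n hn => ⟨θ' n, Finset.mem_image_of_mem _
          (Finset.mem_filter.mpr ⟨Finset.mem_univ _, hn⟩), (hθ' n).1, (hθ' n).2⟩⟩
      have h2 : (Finset.univ.image fun n => (f n, θ' n)) =
          (Finset.Icc 1 d).biUnion fun i => (T i).image fun x => (i, x) := by
        ext ⟨a, b⟩
        simp only [Finset.mem_image, Finset.mem_univ, true_and, Finset.mem_biUnion,
          Finset.mem_Icc, Finset.mem_filter, Prod.mk.injEq, hT]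
        constructor
        · rintro ⟨n, rfl, rfl⟩
          exact ⟨f n, ⟨(hf n).1, (hf n).2⟩, θ' n, ⟨n, rfl, rfl⟩, rfl, rfl⟩
        · rintro ⟨i, -, x, ⟨m, hm1, hm2⟩, rfl, rfl⟩
          exact ⟨m, hm1, hm2⟩
      have hdisj : ∀ i ∈ Finset.Icc 1 d, ∀ j ∈ Finset.Icc 1 d, i ≠ j →
          Disjoint ((T i).image fun x => (i, x)) ((T j).image fun x => (j, x)) := by
        intro i _ j _ hij
        rw [Finset.disjoint_left]
        rintro ⟨a, b⟩ ha hb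
        simp only [Finset.mem_image, Prod.mk.injEq] at ha hb
        obtain ⟨x, _, rfl, _⟩ := ha
        obtain ⟨y, _, h, _⟩ := hb
        exact hij h.symm
      rw [h2, Finset.card_biUnion hdisj]
      refine Finset.sum_le_sum fun i _ => ?_
      have h := h1 i
      simp only [hA] at h
      rwa [Finset.card_image_of_injective _
        (fun a b hab => congrArg Prod.snd hab : Function.Injective fun x : ℝ => (i, x))]
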